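/- Let H be a finite-dimensional real inner product space and E : H → ℝ continuously differentiable. Let (Φ_k) be a sequence in H, ℓ ∈ ℕ, ρ₁, ρ₂ > 0, w̄ ∈ [0,1), η > 0, E* ∈ ℝ, weights w_k ∈ [0, w̄], and a function ψ : [0, η) → ℝ continuous, continuously differentiable and concave on (0, η), with ψ(0) = 0 and ψ' > 0 on (0, η), such that for all k > ℓ: (i) E(Φ_k) − E(Φ_{k+1}) ≥ ρ₁‖Φ_{k+1} − Φ_k‖²; (ii) ‖∇E(Φ_k)‖ ≤ ρ₂(‖Φ_k − Φ_{k−1}‖ + w_{k−1}‖Φ_{k−1} − Φ_{k−2}‖); (iii) E* < E(Φ_k) < E* + η; and (iv) ψ'(E(Φ_k) − E*)‖∇E(Φ_k)‖ ≥ 1. Then the sequence has finite length, ∑_{k=0}^∞ ‖Φ_{k+1} − Φ_k‖ < ∞, hence (Φ_k) converges to some Φ* ∈ H, and ∇E(Φ*) = 0. -/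

import Mathlib

open Filter

private lemma amgm_aux (x y A : ℝ) (hx : 0 ≤ x) (hy : 0 ≤ y) (hA : 0 ≤ A)
    (h : A ^ 2 ≤ x * y) : 2 * A ≤ x + y := by
  nlinarith [sq_nonneg (x - y), sq_nonneg (x + y - 2 * A)]

private lemma key_arith (ρ₁ ρ₂ wbar t Cc A0 A1 A2 P g eΔ Δ : ℝ)
    (hρ₁ : 0 < ρ₁) (hρ₂ : 0 < ρ₂) (hwbar0 : 0 ≤ wbar)
    (ht : t = 1 / (1 + wbar)) (hC : Cc = (ρ₂ / ρ₁) * (1 + wbar))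
    (hA0 : 0 ≤ A0) (hA1 : 0 ≤ A1) (hA2 : 0 ≤ A2) (hg0 : 0 ≤ g)
    (hkl : 1 ≤ P * g) (hP : 0 < P)
    (hdec : ρ₁ * A2 ^ 2 ≤ eΔ) (hconc : P * eΔ ≤ Δ)
    (hgb : g ≤ ρ₂ * (A1 + wbar * A0)) :
    2 * A2 ≤ t * A1 + t * wbar * A0 + Cc * Δ := by
  have h1p : (0 : ℝ) < 1 + wbar := by linarith
  have ht_pos : 0 < t := by rw [ht]; positivity
  have hC_pos : 0 < Cc := by rw [hC]; positivity
  have ht1 : t * (1 + wbar) = 1 := by rw [ht]; field_simp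
  have heΔ : 0 ≤ eΔ := le_trans (by positivity) hdec
  have hΔ0 : 0 ≤ Δ := le_trans (mul_nonneg hP.le heΔ) hconc
  have hX0 : 0 ≤ A1 + wbar * A0 := by positivity
  have hquad : ρ₁ * A2 ^ 2 ≤ Δ * (ρ₂ * (A1 + wbar * A0)) := by
    calc ρ₁ * A2 ^ 2 ≤ (ρ₁ * A2 ^ 2) * (P * g) :=
          le_mul_of_one_le_right (by positivity) hkl
      _ = (P * (ρ₁ * A2 ^ 2)) * g := by ring
      _ ≤ (P * eΔ) * g :=
          mul_le_mul_of_nonneg_right (mul_le_mul_of_nonneg_left hdec hP.le) hg0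
      _ ≤ Δ * g := mul_le_mul_of_nonneg_right hconc hg0
      _ ≤ Δ * (ρ₂ * (A1 + wbar * A0)) := mul_le_mul_of_nonneg_left hgb hΔ0
  have hsq : A2 ^ 2 ≤ (t * (A1 + wbar * A0)) * (Cc * Δ) := by
    have hrw : (t * (A1 + wbar * A0)) * (Cc * Δ)
        = (t * (1 + wbar)) * ((ρ₂ / ρ₁) * ((A1 + wbar * A0) * Δ)) := by rw [hC]; ring
    rw [hrw, ht1, one_mul, div_mul_eq_mul_div, le_div_iff₀ hρ₁]
    nlinarith [hquad]
  have := amgm_aux (t * (A1 + wbar * A0)) (Cc * Δ) A2 (by positivity) (by positivity) hA2 hsq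
  linarith

private lemma sum_shift_le_aux (a : ℕ → ℝ) (ha : ∀ k, 0 ≤ a k) (n : ℕ) (m : ℕ) :
    ∑ k ∈ Finset.range m, a (n + k) ≤ a n + ∑ k ∈ Finset.range m, a (n + 1 + k) := by
  cases m with
  | zero => simpa using ha n
  | succ m =>
    rw [Finset.sum_range_succ', Finset.sum_range_succ]
    have h1 : ∀ k, a (n + (k + 1)) = a (n + 1 + k) := by
      intro k; congr 1; omega
    simp only [h1, Nat.add_zero]
    have h2 : 0 ≤ a (n + 1 + m) := ha _
    linarith

/-- Global convergence (finite length property) of the adaptive APG iterates: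
under sufficient decrease, the gradient bound, energy localization
`E* < E(Φ k) < E* + η`, and the Kurdyka–Łojasiewicz inequality with
desingularizing function `ψ`, the sequence has finite length
`∑ ‖Φ_{k+1} - Φ_k‖ < ∞`, hence converges to some `Φ*`, and `∇E(Φ*) = 0`. -/
theorem adaptive_apg_global_convergence
    {H : Type*} [NormedAddCommGroup H] [InnerProductSpace ℝ H]
    [FiniteDimensional ℝ H]
    (E : H → ℝ) (hE : ContDiff ℝ 1 E)
    (Estar η : ℝ) (hη : 0 < η)
    (ψ ψ' : ℝ → ℝ)
    (hψ_cont : ContinuousOn ψ (Set.Ico 0 η))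
    (hψ_deriv : ∀ s ∈ Set.Ioo (0 : ℝ) η, HasDerivAt ψ (ψ' s) s)
    (hψ'_cont : ContinuousOn ψ' (Set.Ioo 0 η))
    (hψ_concave : ConcaveOn ℝ (Set.Ico 0 η) ψ)
    (hψ0 : ψ 0 = 0)
    (hψ'_pos : ∀ s ∈ Set.Ioo (0 : ℝ) η, 0 < ψ' s)
    (Φ : ℕ → H) (ℓ : ℕ) (ρ₁ ρ₂ wbar : ℝ)
    (hρ₁ : 0 < ρ₁) (hρ₂ : 0 < ρ₂) (hwbar : wbar ∈ Set.Ico (0 : ℝ) 1)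
    (w : ℕ → ℝ) (hw : ∀ k : ℕ, w k ∈ Set.Icc (0 : ℝ) wbar)
    (hdec : ∀ k > ℓ, ρ₁ * ‖Φ (k + 1) - Φ k‖ ^ 2 ≤ E (Φ k) - E (Φ (k + 1)))
    (hgrad : ∀ k > ℓ, ‖gradient E (Φ k)‖
      ≤ ρ₂ * (‖Φ k - Φ (k - 1)‖ + w (k - 1) * ‖Φ (k - 1) - Φ (k - 2)‖))
    (hloc : ∀ k > ℓ, Estar < E (Φ k) ∧ E (Φ k) < Estar + η)
    (hKL : ∀ k > ℓ, 1 ≤ ψ' (E (Φ k) - Estar) * ‖gradient E (Φ k)‖) :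
    Summable (fun k : ℕ => ‖Φ (k + 1) - Φ k‖)
      ∧ ∃ Φstar : H, Tendsto Φ atTop (nhds Φstar) ∧ gradient E Φstar = 0 := by
  obtain ⟨hwbar0, hwbar1⟩ := hwbar
  set a : ℕ → ℝ := fun k => ‖Φ (k + 1) - Φ k‖ with ha_def
  have ha0 : ∀ k, 0 ≤ a k := fun k => norm_nonneg _
  set e : ℕ → ℝ := fun k => E (Φ k) - Estar with he_def
  set b : ℕ → ℝ := fun k => ψ (e k) with hb_def
  have he : ∀ k > ℓ, e k ∈ Set.Ioo 0 η := by
    intro k hk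
    obtain ⟨h1, h2⟩ := hloc k hk
    exact ⟨by simp only [he_def]; linarith, by simp only [he_def]; linarith⟩
  have hdec' : ∀ k > ℓ, ρ₁ * a k ^ 2 ≤ e k - e (k + 1) := by
    intro k hk
    have := hdec k hk
    simp only [he_def, ha_def]
    linarith
  -- positivity of b
  have hb_nonneg : ∀ k > ℓ, 0 ≤ b k := by
    intro k hk
    obtain ⟨h0, h1⟩ := he k hk
    obtain ⟨c, hc, hcslope⟩ := exists_hasDerivAt_eq_slope ψ ψ' h0
      (hψ_cont.mono (Set.Icc_subset_Ico_right h1))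
      (fun x hx => hψ_deriv x ⟨hx.1, hx.2.trans h1⟩)
    have hψ'c : 0 < ψ' c := hψ'_pos c ⟨hc.1, hc.2.trans h1⟩
    have : ψ (e k) - ψ 0 = ψ' c * (e k - 0) := by
      field_simp at hcslope
      linarith [hcslope]
    have : ψ (e k) = ψ' c * e k := by rw [hψ0] at this; linarith
    simp only [hb_def]
    rw [this]
    positivity
  -- concavity tangent inequality
  have hconc : ∀ k > ℓ, ψ' (e k) * (e k - e (k + 1)) ≤ b k - b (k + 1) := by
    intro k hk
    have hk1 : k + 1 > ℓ := Nat.lt_succ_of_lt hk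
    have hek := he k hk
    have hek1 := he (k + 1) hk1
    have hle : e (k + 1) ≤ e k := by
      have h1 := hdec' k hk
      have h2 : 0 ≤ ρ₁ * a k ^ 2 := mul_nonneg hρ₁.le (sq_nonneg _)
      linarith
    rcases eq_or_lt_of_le hle with heq | hlt
    · simp [hb_def, ← heq]
    · have hslope := hψ_concave.le_slope_of_hasDerivAt
        (Set.mem_Ico.mpr ⟨le_of_lt hek1.1, hek1.2⟩)
        (Set.mem_Ico.mpr ⟨le_of_lt hek.1, hek.2⟩)
        hlt (hψ_deriv (e k) hek)
      rw [slope_def_field] at hslope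
      have hden : (0 : ℝ) < e k - e (k + 1) := by linarith
      have := (le_div_iff₀ hden).mp hslope
      simp only [hb_def]
      linarith
  set t : ℝ := 1 / (1 + wbar) with ht_def
  set C : ℝ := (ρ₂ / ρ₁) * (1 + wbar) with hC_def
  have ht_pos : 0 < t := by rw [ht_def]; positivity
  have hC_pos : 0 < C := by rw [hC_def]; positivity
  have ht1 : t * (1 + wbar) = 1 := by
    rw [ht_def]; field_simp
  -- key inequality
  have key : ∀ j > ℓ, 2 * a (j + 2) ≤ t * a (j + 1) + t * wbar * a j
      + C * (b (j + 2) - b (j + 2 + 1)) := by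
    intro j hj
    have hj2 : j + 2 > ℓ := by omega
    have hg := hgrad (j + 2) hj2
    have hidx1 : j + 2 - 1 = j + 1 := by omega
    have hidx2 : j + 2 - 2 = j := by omega
    rw [hidx1, hidx2] at hg
    have hg' : ‖gradient E (Φ (j + 2))‖ ≤ ρ₂ * (a (j + 1) + wbar * a j) := by
      have hwj := hw (j + 1)
      have h1 : w (j + 1) * ‖Φ (j + 1) - Φ j‖ ≤ wbar * a j :=
        mul_le_mul_of_nonneg_right hwj.2 (norm_nonneg _)
      have haeq : ‖Φ (j + 2) - Φ (j + 1)‖ = a (j + 1) := rfl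
      rw [haeq] at hg
      have h2 : ρ₂ * (a (j + 1) + w (j + 1) * ‖Φ (j + 1) - Φ j‖)
          ≤ ρ₂ * (a (j + 1) + wbar * a j) :=
        mul_le_mul_of_nonneg_left (by linarith) hρ₂.le
      exact hg.trans h2
    have hkl' : 1 ≤ ψ' (e (j + 2)) * ‖gradient E (Φ (j + 2))‖ := hKL (j + 2) hj2
    have hP : 0 < ψ' (e (j + 2)) := hψ'_pos _ (he _ hj2)
    exact key_arith ρ₁ ρ₂ wbar t C (a j) (a (j + 1)) (a (j + 2)) (ψ' (e (j + 2)))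
      ‖gradient E (Φ (j + 2))‖ (e (j + 2) - e (j + 2 + 1)) (b (j + 2) - b (j + 2 + 1))
      hρ₁ hρ₂ hwbar0 ht_def hC_def (ha0 j) (ha0 (j + 1)) (ha0 (j + 2)) (norm_nonneg _)
      hkl' hP (hdec' (j + 2) hj2) (hconc (j + 2) hj2) hg'
  -- reindexed key inequality
  have key' : ∀ k : ℕ, 2 * a (ℓ + 3 + k) ≤ t * a (ℓ + 2 + k) + t * wbar * a (ℓ + 1 + k)
      + C * (b (ℓ + 3 + k) - b (ℓ + 3 + (k + 1))) := by
    intro k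
    have h := key (ℓ + 1 + k) (by omega)
    have e1 : ℓ + 1 + k + 2 = ℓ + 3 + k := by omega
    have e2 : ℓ + 1 + k + 1 = ℓ + 2 + k := by omega
    have e3 : ℓ + 1 + k + 2 + 1 = ℓ + 3 + (k + 1) := by omega
    rw [e3, e1, e2] at h
    exact h
  -- partial sum bound
  set S : ℕ → ℝ := fun m => ∑ k ∈ Finset.range m, a (ℓ + 3 + k) with hS_def
  set B : ℝ := t * (a (ℓ + 2) + 0) + t * wbar * (a (ℓ + 1) + a (ℓ + 2)) + C * b (ℓ + 3) with hB_def
  have hsumbound : ∀ m, S m ≤ B := by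
    intro m
    have hsum := Finset.sum_le_sum (fun k (_ : k ∈ Finset.range m) => key' k)
    have hL : ∑ k ∈ Finset.range m, 2 * a (ℓ + 3 + k) = 2 * S m := by
      rw [hS_def, Finset.mul_sum]
    have hR : ∑ k ∈ Finset.range m, (t * a (ℓ + 2 + k) + t * wbar * a (ℓ + 1 + k)
        + C * (b (ℓ + 3 + k) - b (ℓ + 3 + (k + 1))))
        = t * (∑ k ∈ Finset.range m, a (ℓ + 2 + k))
          + t * wbar * (∑ k ∈ Finset.range m, a (ℓ + 1 + k))
          + C * (∑ k ∈ Finset.range m, (b (ℓ + 3 + k) - b (ℓ + 3 + (k + 1)))) := by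
      rw [Finset.mul_sum, Finset.mul_sum, Finset.mul_sum, ← Finset.sum_add_distrib,
        ← Finset.sum_add_distrib]
    rw [hL, hR] at hsum
    -- telescoping
    have htel : ∑ k ∈ Finset.range m, (b (ℓ + 3 + k) - b (ℓ + 3 + (k + 1)))
        = b (ℓ + 3) - b (ℓ + 3 + m) := by
      have := Finset.sum_range_sub' (fun k => b (ℓ + 3 + k)) m
      simpa using this
    rw [htel] at hsum
    -- shifted sums
    have hsh1 : ∑ k ∈ Finset.range m, a (ℓ + 2 + k) ≤ a (ℓ + 2) + S m := by
      have := sum_shift_le_aux a ha0 (ℓ + 2) m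
      have he23 : ∀ k, a (ℓ + 2 + 1 + k) = a (ℓ + 3 + k) := fun k => by congr 1 <;> omega
      simp only [he23] at this
      exact this
    have hsh2 : ∑ k ∈ Finset.range m, a (ℓ + 1 + k) ≤ a (ℓ + 1) + (a (ℓ + 2) + S m) := by
      have h1 := sum_shift_le_aux a ha0 (ℓ + 1) m
      have h2 := sum_shift_le_aux a ha0 (ℓ + 2) m
      have he12 : ∀ k, a (ℓ + 1 + 1 + k) = a (ℓ + 2 + k) := fun k => by congr 1 <;> omega
      have he23 : ∀ k, a (ℓ + 2 + 1 + k) = a (ℓ + 3 + k) := fun k => by congr 1 <;> omega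
      simp only [he12] at h1
      simp only [he23] at h2
      linarith
    have hbm : 0 ≤ b (ℓ + 3 + m) := hb_nonneg (ℓ + 3 + m) (by omega)
    have htw0 : 0 ≤ t * wbar := by positivity
    have h1 : t * (∑ k ∈ Finset.range m, a (ℓ + 2 + k)) ≤ t * (a (ℓ + 2) + S m) :=
      mul_le_mul_of_nonneg_left hsh1 ht_pos.le
    have h2 : t * wbar * (∑ k ∈ Finset.range m, a (ℓ + 1 + k))
        ≤ t * wbar * (a (ℓ + 1) + (a (ℓ + 2) + S m)) :=
      mul_le_mul_of_nonneg_left hsh2 htw0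
    have h3 : C * (b (ℓ + 3) - b (ℓ + 3 + m)) ≤ C * b (ℓ + 3) :=
      mul_le_mul_of_nonneg_left (by linarith) hC_pos.le
    have h4 : 2 * S m ≤ t * (a (ℓ + 2) + S m) + t * wbar * (a (ℓ + 1) + (a (ℓ + 2) + S m))
        + C * b (ℓ + 3) := by linarith
    have hcoef : t + t * wbar = 1 := by linarith [ht1]
    have hexp1 : t * (a (ℓ + 2) + S m) = t * a (ℓ + 2) + t * S m := by ring
    have hexp2 : t * wbar * (a (ℓ + 1) + (a (ℓ + 2) + S m))
        = t * wbar * a (ℓ + 1) + t * wbar * a (ℓ + 2) + t * wbar * S m := by ring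
    have hS1 : t * S m + t * wbar * S m = S m := by linear_combination S m * hcoef
    rw [hB_def]
    rw [hexp1, hexp2] at h4
    linarith
  -- summability
  have hsummable : Summable a := by
    have h1 : Summable (fun k => a (ℓ + 3 + k)) :=
      summable_of_sum_range_le (fun n => ha0 _) hsumbound
    have h2 : Summable (fun k => a (k + (ℓ + 3))) := by
      simpa [Nat.add_comm] using h1
    exact (summable_nat_add_iff (ℓ + 3)).mp h2
  refine ⟨hsummable, ?_⟩
  -- convergence
  have hcs : CauchySeq Φ := by
    apply cauchySeq_of_summable_dist
    simpa only [dist_eq_norm'] using hsummable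
  obtain ⟨Φstar, hΦstar⟩ := cauchySeq_tendsto_of_complete hcs
  refine ⟨Φstar, hΦstar, ?_⟩
  -- continuity of the gradient
  have hgc : Continuous (gradient E) := by
    have h1 : Continuous (fun x => fderiv ℝ E x) := hE.continuous_fderiv one_ne_zero
    exact (InnerProductSpace.toDual ℝ H).symm.continuous.comp h1
  have hlim1 : Tendsto (fun k => gradient E (Φ k)) atTop (nhds (gradient E Φstar)) :=
    (hgc.tendsto Φstar).comp hΦstar
  -- gradient norms tend to zero
  have ha_lim : Tendsto a atTop (nhds 0) := hsummable.tendsto_atTop_zero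
  have hb1 : Tendsto (fun k : ℕ => a (k - 1)) atTop (nhds 0) :=
    ha_lim.comp (tendsto_sub_atTop_nat 1)
  have hb2 : Tendsto (fun k : ℕ => a (k - 2)) atTop (nhds 0) :=
    ha_lim.comp (tendsto_sub_atTop_nat 2)
  have hBlim : Tendsto (fun k : ℕ => ρ₂ * (a (k - 1) + wbar * a (k - 2))) atTop (nhds 0) := by
    have := ((hb1.add (hb2.const_mul wbar)).const_mul ρ₂)
    simpa using this
  have hbound : ∀ᶠ k : ℕ in atTop, ‖gradient E (Φ k)‖ ≤ ρ₂ * (a (k - 1) + wbar * a (k - 2)) := by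
    filter_upwards [eventually_ge_atTop (ℓ + 3)] with k hk
    have hg := hgrad k (by omega)
    have hwk := hw (k - 1)
    have hk1 : k - 1 + 1 = k := by omega
    have hk2 : k - 2 + 1 = k - 1 := by omega
    have haeq1 : a (k - 1) = ‖Φ k - Φ (k - 1)‖ := by
      simp only [ha_def]; rw [hk1]
    have haeq2 : a (k - 2) = ‖Φ (k - 1) - Φ (k - 2)‖ := by
      simp only [ha_def]; rw [hk2]
    rw [← haeq1, ← haeq2] at hg
    have h1 : w (k - 1) * a (k - 2) ≤ wbar * a (k - 2) :=
      mul_le_mul_of_nonneg_right hwk.2 (ha0 _)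
    have h2 : ρ₂ * (a (k - 1) + w (k - 1) * a (k - 2)) ≤ ρ₂ * (a (k - 1) + wbar * a (k - 2)) :=
      mul_le_mul_of_nonneg_left (by linarith) hρ₂.le
    exact hg.trans h2
  have hlim2 : Tendsto (fun k => gradient E (Φ k)) atTop (nhds 0) :=
    squeeze_zero_norm' hbound hBlim
  exact tendsto_nhds_unique hlim1 hlim2
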